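/- With Tr(ρ_p·W) = (α+1)(1−p) + α·p/2^{n−1} and biseparable bound α/2 + 1, the inequality Tr(ρ_p·W) > α/2 + 1 holds if and only if p < α/(2 + (2 − 2^{2−n})α); moreover over α ∈ (0,2] the right-hand side is maximized at α = 2, giving threshold 1/(3 − 2^{2−n}). -/

import Mathlib

/-- With witness value `(α+1)(1−p) + αp/2^{n−1}` and biseparable bound `α/2 + 1`, the witness is
violated iff `p < α/(2 + (2 − 2^{2−n})α)`; the threshold is maximized over `α ∈ (0,2]` at `α = 2`,
giving `1/(3 − 2^{2−n})`. -/
theorem stmt9 (n : ℕ) (hn : 2 ≤ n) (α p : ℝ)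
    (hα : α ∈ Set.Ioc (0 : ℝ) 2) (hp : p ∈ Set.Icc (0 : ℝ) 1) :
    ((α + 1) * (1 - p) + α * p / 2 ^ (n - 1) > α / 2 + 1 ↔
        p < α / (2 + (2 - (2 : ℝ) ^ ((2 : ℤ) - n)) * α)) ∧
    IsMaxOn (fun a : ℝ => a / (2 + (2 - (2 : ℝ) ^ ((2 : ℤ) - n)) * a)) (Set.Ioc 0 2) 2 ∧
    (2 : ℝ) / (2 + (2 - (2 : ℝ) ^ ((2 : ℤ) - n)) * 2) = 1 / (3 - (2 : ℝ) ^ ((2 : ℤ) - n)) := by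
  obtain ⟨hα0, hα2⟩ := hα
  obtain ⟨hp0, hp1⟩ := hp
  set c : ℝ := (2:ℝ) ^ ((2:ℤ) - n) with hc
  have hc0 : 0 < c := zpow_pos (by norm_num) _
  have hc1 : c ≤ 1 := by
    rw [hc]
    calc (2:ℝ) ^ ((2:ℤ) - n) ≤ (2:ℝ) ^ (0:ℤ) := by
          apply zpow_le_zpow_right₀ (by norm_num) (by omega)
      _ = 1 := by norm_num
  have h2 : (0:ℝ) < 2 ^ (n - 1) := by positivity
  have hpow : (2:ℝ) ^ (n - 1) * c = 2 := by
    rw [hc, ← zpow_natCast (2:ℝ) (n - 1), ← zpow_add₀ (by norm_num : (2:ℝ) ≠ 0)]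
    have h : ((n - 1 : ℕ) : ℤ) + ((2:ℤ) - n) = 1 := by omega
    rw [h, zpow_one]
  have hD : 0 < 2 + (2 - c) * α := by nlinarith
  have key : α * p / 2 ^ (n - 1) = α * p * c / 2 := by
    rw [div_eq_div_iff h2.ne' two_ne_zero]
    linear_combination (-(α * p)) * hpow
  refine ⟨?_, ?_, ?_⟩
  · rw [key, gt_iff_lt, lt_div_iff₀ hD]
    constructor <;> intro h <;> nlinarith
  · rw [isMaxOn_iff]
    intro x hx
    obtain ⟨hx0, hx2⟩ := hx
    have hDx : 0 < 2 + (2 - c) * x := by nlinarith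
    have hD2 : 0 < 2 + (2 - c) * 2 := by nlinarith
    show x / (2 + (2 - c) * x) ≤ 2 / (2 + (2 - c) * 2)
    rw [div_le_div_iff₀ hDx hD2]
    nlinarith
  · have h1 : (2:ℝ) + (2 - c) * 2 ≠ 0 := by nlinarith
    have h2 : (3:ℝ) - c ≠ 0 := by nlinarith
    rw [div_eq_div_iff h1 h2]
    ring
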